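/- In a cycle set S, for any fixed t_1,...,t_k ∈ S, the map s ↦ Ω_{k+1}(t_1,...,t_k,s) is a bijection of S. -/

import Mathlib

/-- Dehornoy's `Ω` expression: `Omega op k t` is `Ω_{k+1}(t 0, …, t k)`,
defined by `Ω_1(x) = x` and
`Ω_k(x_1,…,x_k) = Ω_{k-1}(x_1,…,x_{k-1}) * Ω_{k-1}(x_1,…,x_{k-2},x_k)`. -/
def Omega {S : Type*} (op : S → S → S) : (k : ℕ) → (Fin (k + 1) → S) → S
  | 0, t => t 0
  | k + 1, t =>
      op (Omega op k fun i => t i.castSucc)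
        (Omega op k fun i =>
          if i = Fin.last k then t (Fin.last (k + 1)) else t i.castSucc)

/-- In a cycle set, for fixed `t_1, …, t_k`, the map `s ↦ Ω_{k+1}(t_1,…,t_k,s)`
is a bijection of `S`. -/
theorem Omega_last_bijective {S : Type*} (op : S → S → S)
    (hbij : ∀ s : S, Function.Bijective (op s))
    (hcs : ∀ s t u : S, op (op s t) (op s u) = op (op t s) (op t u))
    (k : ℕ) (t : Fin k → S) :
    Function.Bijective (fun s : S => Omega op k (Fin.snoc t s)) := by
  induction k with
  | zero =>
    have h : (fun s : S => Omega op 0 (Fin.snoc t s)) = id := by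
      funext s
      simp [Omega, Fin.snoc]
    rw [h]
    exact Function.bijective_id
  | succ k ih =>
    have h : (fun s : S => Omega op (k + 1) (Fin.snoc t s))
        = (op (Omega op k fun i => t i)) ∘
          (fun s : S => Omega op k (Fin.snoc (fun j : Fin k => t j.castSucc) s)) := by
      funext s
      simp only [Omega, Function.comp_apply]
      congr 1
      · congr 1
        funext i
        simp [Fin.snoc_castSucc]
      · congr 1
        funext i
        cases i using Fin.lastCases with
        | last => simp
        | cast j => simp [Fin.snoc_castSucc, Fin.ne_of_lt (Fin.castSucc_lt_last j)]
    rw [h]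
    exact (hbij _).comp (ih _)
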